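/- arXiv:1612.07641 — 2 statements merged into one kernel-verified Lean document; each statement's English description precedes it below -/
import Mathlib

section
/- Let n ≥ 1 and let J = (j_1,…,j_{2n}) be a list such that every value j occurring in J occurs an even number m_j of times. Then the number of pair partitions τ = {{a_1,b_1},…,{a_n,b_n}} ∈ M_{2n} with δ_J(τ) = 1 (i.e., pairing only positions carrying equal values of J) equals ∏_j (m_j − 1)!!, the product over the distinct values j occurring in J, where (2k−1)!! = 1·3·5⋯(2k−1). -/
open Equiv Finset

def pairInv (n : ℕ) : Fin (2*n) → Fin (2*n) :=
  fun x => ⟨2 * (x.val / 2) + (1 - x.val % 2), by omega⟩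

lemma pairInv_involutive (n : ℕ) : Function.Involutive (pairInv n) := by
  intro x
  apply Fin.ext
  simp only [pairInv]
  omega

/-- The graph Γ(σ): red edges {2k,2k+1} (0-indexed) and blue edges {σ(2k),σ(2k+1)}. -/
def gammaGraph {n : ℕ} (σ : Perm (Fin (2*n))) : SimpleGraph (Fin (2*n)) where
  Adj x y := x ≠ y ∧ (pairInv n x = y ∨ pairInv n (σ⁻¹ x) = σ⁻¹ y)
  symm := by
    constructor
    rintro x y ⟨hxy, h | h⟩
    · exact ⟨hxy.symm, Or.inl (by rw [← h, pairInv_involutive])⟩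
    · exact ⟨hxy.symm, Or.inr (by rw [← h, pairInv_involutive])⟩
  loopless := by constructor; rintro x ⟨hx, -⟩; exact hx rfl

instance {n : ℕ} (σ : Perm (Fin (2*n))) : DecidableRel (gammaGraph σ).Adj :=
  fun x y => inferInstanceAs (Decidable (x ≠ y ∧ (pairInv n x = y ∨ pairInv n (σ⁻¹ x) = σ⁻¹ y)))

/-- The coset-type of σ ∈ S_{2n}: the multiset of half-sizes of the connected
components of Γ(σ). -/
noncomputable def cosetType {n : ℕ} (σ : Perm (Fin (2*n))) : Multiset ℕ := by
  classical
  exact (Finset.univ : Finset (gammaGraph σ).ConnectedComponent).val.map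
    (fun c => (Finset.univ.filter fun v => (gammaGraph σ).connectedComponentMk v = c).card / 2)

/-- σ ∈ M_{2n}: the permutation (in one-line notation a₁ b₁ a₂ b₂ ⋯) of a pair partition,
i.e. σ(2k) < σ(2k+1) and σ(0) < σ(2) < ⋯ (0-indexed). -/
def isPairPerm {n : ℕ} (σ : Perm (Fin (2*n))) : Prop :=
  (∀ (k : ℕ) (h : k < n), σ ⟨2*k, by omega⟩ < σ ⟨2*k+1, by omega⟩) ∧
  (∀ (k : ℕ) (h : k+1 < n), σ ⟨2*k, by omega⟩ < σ ⟨2*k+2, by omega⟩)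

/-- δ_I(σ) = 1 : the pair partition σ pairs only positions carrying equal values of I. -/
def pairsEq {n : ℕ} {α : Type*} (I : Fin (2*n) → α) (σ : Perm (Fin (2*n))) : Prop :=
  ∀ (k : ℕ) (h : k < n), I (σ ⟨2*k, by omega⟩) = I (σ ⟨2*k+1, by omega⟩)

/-- C(λ): the number of pair partitions in M_{2n} with coset-type λ. -/
noncomputable def CC (n : ℕ) (lam : Multiset ℕ) : ℕ :=
  Nat.card {σ : Perm (Fin (2*n)) // isPairPerm σ ∧ cosetType σ = lam}


section Aux
open Nat

open Finset Nat

variable {α : Type*} [DecidableEq α] [Fintype α]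

def FPF (s : Finset α) (f : α → α) : Prop :=
  (∀ x, f (f x) = x) ∧ (∀ x ∈ s, f x ∈ s ∧ f x ≠ x) ∧ (∀ x ∉ s, f x = x)

instance (s : Finset α) : DecidablePred (FPF (α := α) s) := by
  unfold FPF; infer_instance

def fpfDrop (f : α → α) (a : α) : α → α := fun x => if x = a ∨ x = f a then x else f x

def fpfAdd (g : α → α) (a b : α) : α → α :=
  fun x => if x = a then b else if x = b then a else g x

theorem FPF.inj {s : Finset α} {f : α → α} (h : FPF s f) : Function.Injective f :=
  Function.LeftInverse.injective h.1

theorem FPF.drop {s : Finset α} {f : α → α} (h : FPF s f) {a : α} (ha : a ∈ s) :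
    FPF ((s.erase a).erase (f a)) (fpfDrop f a) := by
  obtain ⟨h1, h2, h3⟩ := h
  have finj : Function.Injective f := Function.LeftInverse.injective h1
  refine ⟨?_, ?_, ?_⟩
  · intro x
    by_cases hx : x = a ∨ x = f a
    · simp [fpfDrop, if_pos hx]
    · unfold fpfDrop
      rw [if_neg hx, if_neg]
      · exact h1 x
      · rintro (h | h)
        · exact hx (Or.inr (by rw [← h, h1]))
        · exact hx (Or.inl (finj h))
  · intro x hx
    rw [Finset.mem_erase, Finset.mem_erase] at hx
    obtain ⟨hxfa, hxa, hxs⟩ := hx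
    have hne : ¬ (x = a ∨ x = f a) := by tauto
    unfold fpfDrop
    rw [if_neg hne]
    refine ⟨Finset.mem_erase.2 ⟨?_, Finset.mem_erase.2 ⟨?_, (h2 x hxs).1⟩⟩, (h2 x hxs).2⟩
    · intro h; exact hxa (finj h)
    · intro h; exact hxfa (by rw [← h1 x, h])
  · intro x hx
    unfold fpfDrop
    by_cases hc : x = a ∨ x = f a
    · rw [if_pos hc]
    · rw [if_neg hc]
      push_neg at hc
      apply h3
      intro hxs
      simp [Finset.mem_erase, hc.1, hc.2, hxs] at hx

theorem FPF.add {s : Finset α} {g : α → α} {a b : α} (ha : a ∈ s) (hb : b ∈ s.erase a)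
    (h : FPF ((s.erase a).erase b) g) : FPF s (fpfAdd g a b) := by
  obtain ⟨hg1, hg2, hg3⟩ := h
  rw [Finset.mem_erase] at hb
  obtain ⟨hba, hbs⟩ := hb
  refine ⟨?_, ?_, ?_⟩
  · intro x
    unfold fpfAdd
    rcases Decidable.em (x = a) with rfl | hxa
    · simp [hba, if_neg hba]
    · rw [if_neg hxa]
      rcases Decidable.em (x = b) with rfl | hxb
      · simp
      · rw [if_neg hxb]
        rcases Decidable.em (x ∈ (s.erase a).erase b) with hxt | hxt
        · have hgx := (hg2 x hxt).1
          rw [Finset.mem_erase, Finset.mem_erase] at hgx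
          rw [if_neg hgx.2.1, if_neg hgx.1, hg1]
        · rw [hg3 x hxt, if_neg hxa, if_neg hxb, hg3 x hxt]
  · intro x hx
    unfold fpfAdd
    rcases Decidable.em (x = a) with rfl | hxa
    · rw [if_pos rfl]; exact ⟨hbs, hba⟩
    · rw [if_neg hxa]
      rcases Decidable.em (x = b) with rfl | hxb
      · rw [if_pos rfl]; exact ⟨ha, Ne.symm hba⟩
      · rw [if_neg hxb]
        have hxt : x ∈ (s.erase a).erase b :=
          Finset.mem_erase.2 ⟨hxb, Finset.mem_erase.2 ⟨hxa, hx⟩⟩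
        have hm := (hg2 x hxt).1
        rw [Finset.mem_erase, Finset.mem_erase] at hm
        exact ⟨hm.2.2, (hg2 x hxt).2⟩
  · intro x hx
    have hxa : x ≠ a := fun h => hx (h ▸ ha)
    have hxb : x ≠ b := fun h => hx (h ▸ hbs)
    unfold fpfAdd
    rw [if_neg hxa, if_neg hxb]
    exact hg3 x (fun h => hx (Finset.mem_of_mem_erase (Finset.mem_of_mem_erase h)))

theorem card_FPF : ∀ (s : Finset α), Even s.card → Nat.card {f : α → α // FPF s f} = (s.card - 1)‼ := by
  intro s
  induction s using Finset.strongInduction with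
  | _ s ih =>
    intro hs
    rcases s.eq_empty_or_nonempty with rfl | ⟨a, ha⟩
    · haveI : Unique {f : α → α // FPF (∅ : Finset α) f} :=
        { default := ⟨id, by refine ⟨fun x => rfl, ?_, fun x _ => rfl⟩; simp⟩
          uniq := by
            rintro ⟨f, h1, h2, h3⟩
            ext x
            exact h3 x (by simp) }
      simp [Nat.card_unique]
    · have key1 : {f : α → α // FPF s f} ≃
          {p : α × (α → α) // p.1 ∈ s.erase a ∧ FPF ((s.erase a).erase p.1) p.2} :=
        { toFun := fun f => ⟨(f.1 a, fpfDrop f.1 a),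
            Finset.mem_erase.2 ⟨(f.2.2.1 a ha).2, (f.2.2.1 a ha).1⟩, f.2.drop ha⟩
          invFun := fun p => ⟨fpfAdd p.1.2 a p.1.1, FPF.add ha p.2.1 p.2.2⟩
          left_inv := by
            rintro ⟨f, h1, h2, h3⟩
            apply Subtype.ext
            funext x
            show fpfAdd (fpfDrop f a) a (f a) x = f x
            unfold fpfAdd fpfDrop
            rcases Decidable.em (x = a) with rfl | hxa
            · rw [if_pos rfl]
            · rw [if_neg hxa]
              rcases Decidable.em (x = f a) with rfl | hxfa
              · rw [if_pos rfl, h1]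
              · rw [if_neg hxfa, if_neg (by tauto)]
          right_inv := by
            rintro ⟨⟨b, g⟩, hb, hg1, hg2, hg3⟩
            dsimp only at hb hg1 hg2 hg3
            have hb' := hb
            rw [Finset.mem_erase] at hb'
            obtain ⟨hba, hbs⟩ := hb'
            have e1 : fpfAdd g a b a = b := by simp [fpfAdd]
            apply Subtype.ext
            dsimp only
            refine Prod.ext e1 ?_
            funext x
            show fpfDrop (fpfAdd g a b) a x = g x
            unfold fpfDrop fpfAdd
            rw [show (if a = a then b else if a = b then a else g a) = b from by simp]
            rcases Decidable.em (x = a) with h | hxa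
            · rw [if_pos (Or.inl h), h, hg3 a (by simp [Finset.mem_erase])]
            · rcases Decidable.em (x = b) with h | hxb
              · rw [if_pos (Or.inr h), h, hg3 b (by simp [Finset.mem_erase])]
              · rw [if_neg (by tauto), if_neg hxa, if_neg hxb] }
      have key2 : {p : α × (α → α) // p.1 ∈ s.erase a ∧ FPF ((s.erase a).erase p.1) p.2} ≃
          (b : {b // b ∈ s.erase a}) × {g : α → α // FPF ((s.erase a).erase b.1) g} :=
        { toFun := fun p => ⟨⟨p.1.1, p.2.1⟩, ⟨p.1.2, p.2.2⟩⟩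
          invFun := fun q => ⟨(q.1.1, q.2.1), q.1.2, q.2.2⟩
          left_inv := fun p => rfl
          right_inv := fun q => rfl }
      rw [Nat.card_congr (key1.trans key2)]
      rw [Nat.card_eq_fintype_card, Fintype.card_sigma]
      have hcard : ∀ b : {b // b ∈ s.erase a},
          Fintype.card {g : α → α // FPF ((s.erase a).erase b.1) g} = (s.card - 2 - 1)‼ := by
        rintro ⟨b, hb⟩
        have hsub : (s.erase a).erase b ⊂ s :=
          lt_of_le_of_lt (Finset.erase_subset _ _) (Finset.erase_ssubset ha)
        have hc : ((s.erase a).erase b).card = s.card - 2 := by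
          have h1 : 2 ≤ s.card := by
            have := Finset.card_erase_of_mem (Finset.mem_of_mem_erase hb : b ∈ s)
            have h0 : 0 < s.card := Finset.card_pos.2 ⟨a, ha⟩
            have : (s.erase a).Nonempty := ⟨b, hb⟩
            have := Finset.card_pos.2 this
            rw [Finset.card_erase_of_mem ha] at this
            omega
          rw [Finset.card_erase_of_mem hb, Finset.card_erase_of_mem ha]
          omega
        rw [← Nat.card_eq_fintype_card, ih _ hsub (by rw [hc]; obtain ⟨k, hk⟩ := hs; exact ⟨k - 1, by omega⟩), hc]
      rw [Finset.sum_congr rfl (fun b _ => hcard b), Finset.sum_const, smul_eq_mul]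
      have hcu : Fintype.card {b // b ∈ s.erase a} = s.card - 1 := by
        rw [Fintype.card_coe, Finset.card_erase_of_mem ha]
      obtain ⟨k, hk⟩ := hs
      have h0 : 0 < s.card := Finset.card_pos.2 ⟨a, ha⟩
      rcases Nat.lt_or_ge k 2 with hklt | hkge
      · have h2 : s.card = 2 := by omega
        rw [Finset.card_univ, hcu, h2]
        simp [Nat.doubleFactorial]
      · have e2 : s.card - 2 - 1 = s.card - 3 := by omega
        have e3 : s.card - 1 = (s.card - 3) + 2 := by omega
        rw [Finset.card_univ, hcu, e2, e3, Nat.doubleFactorial_add_two]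

def fpfRestrict (u : Finset α) (f : α → α) : α → α := fun x => if x ∈ u then f x else x

def fpfGlue (t : Finset α) (g h : α → α) : α → α := fun x => if x ∈ t then g x else h x

theorem FPF.restrict {s u : Finset α} {f : α → α} (h : FPF s f) (hu : u ⊆ s)
    (hm : ∀ x ∈ u, f x ∈ u) : FPF u (fpfRestrict u f) := by
  obtain ⟨h1, h2, h3⟩ := h
  refine ⟨?_, ?_, ?_⟩
  · intro x
    unfold fpfRestrict
    by_cases hx : x ∈ u
    · rw [if_pos hx, if_pos (hm x hx), h1]
    · rw [if_neg hx, if_neg hx]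
  · intro x hx
    unfold fpfRestrict
    rw [if_pos hx]
    exact ⟨hm x hx, (h2 x (hu hx)).2⟩
  · intro x hx
    unfold fpfRestrict
    rw [if_neg hx]

theorem FPF.glue {s t r : Finset α} {g h : α → α} (hts : t ⊆ s) (hrs : r ⊆ s)
    (htr : ∀ x, x ∈ t → x ∈ r → False) (hst : ∀ x ∈ s, x ∉ t → x ∈ r)
    (hg : FPF t g) (hh : FPF r h) : FPF s (fpfGlue t g h) := by
  obtain ⟨hg1, hg2, hg3⟩ := hg
  obtain ⟨hh1, hh2, hh3⟩ := hh
  refine ⟨?_, ?_, ?_⟩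
  · intro x
    unfold fpfGlue
    by_cases hx : x ∈ t
    · rw [if_pos hx, if_pos ((hg2 x hx).1), hg1]
    · rw [if_neg hx]
      by_cases hxr : x ∈ r
      · rw [if_neg (fun hc => htr _ hc (hh2 x hxr).1), hh1]
      · rw [hh3 x hxr, if_neg hx, hh3 x hxr]
  · intro x hx
    unfold fpfGlue
    by_cases hxt : x ∈ t
    · rw [if_pos hxt]
      exact ⟨hts (hg2 x hxt).1, (hg2 x hxt).2⟩
    · rw [if_neg hxt]
      have hxr := hst x hx hxt
      exact ⟨hrs (hh2 x hxr).1, (hh2 x hxr).2⟩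
  · intro x hx
    unfold fpfGlue
    rw [if_neg (fun hc => hx (hts hc)), hh3 x (fun hc => hx (hrs hc))]

theorem card_FPF_colored (J : α → ℕ) :
    ∀ (s : Finset α), (∀ j, Even ((s.filter fun x => J x = j).card)) →
      Nat.card {f : α → α // FPF s f ∧ ∀ x ∈ s, J (f x) = J x} =
        ∏ j ∈ s.image J, (((s.filter fun x => J x = j).card) - 1)‼ := by
  intro s
  induction s using Finset.strongInduction with
  | _ s ih =>
    intro hs
    rcases s.eq_empty_or_nonempty with rfl | ⟨a, ha⟩
    · haveI : Unique {f : α → α // FPF (∅ : Finset α) f ∧ ∀ x ∈ (∅ : Finset α), J (f x) = J x} :=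
        { default := ⟨id, ⟨fun x => rfl, by simp, fun x _ => rfl⟩, by simp⟩
          uniq := by
            rintro ⟨f, ⟨h1, h2, h3⟩, h4⟩
            ext x
            exact h3 x (by simp) }
      rw [Nat.card_unique]
      simp
    · set j₀ := J a with hj₀
      set t := s.filter (fun x => J x = j₀) with ht
      set r := s.filter (fun x => ¬ J x = j₀) with hr
      have htr : ∀ x, x ∈ t → x ∈ r → False := by
        intro x hxt hxr
        rw [ht, Finset.mem_filter] at hxt
        rw [hr, Finset.mem_filter] at hxr
        exact hxr.2 hxt.2
      have hts : t ⊆ s := Finset.filter_subset _ _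
      have hrs : r ⊆ s := Finset.filter_subset _ _
      have hst : ∀ x ∈ s, x ∉ t → x ∈ r := by
        intro x hxs hxt
        rw [hr, Finset.mem_filter]
        refine ⟨hxs, fun h => hxt ?_⟩
        rw [ht, Finset.mem_filter]; exact ⟨hxs, h⟩
      have hmt : ∀ (f : α → α), FPF s f → (∀ x ∈ s, J (f x) = J x) → ∀ x ∈ t, f x ∈ t := by
        intro f hf h4 x hx
        rw [ht, Finset.mem_filter] at hx ⊢
        exact ⟨(hf.2.1 x hx.1).1, by rw [h4 x hx.1, hx.2]⟩
      have hmr : ∀ (f : α → α), FPF s f → (∀ x ∈ s, J (f x) = J x) → ∀ x ∈ r, f x ∈ r := by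
        intro f hf h4 x hx
        rw [hr, Finset.mem_filter] at hx ⊢
        exact ⟨(hf.2.1 x hx.1).1, by rw [h4 x hx.1]; exact hx.2⟩
      have key : {f : α → α // FPF s f ∧ ∀ x ∈ s, J (f x) = J x} ≃
          {g : α → α // FPF t g} × {h : α → α // FPF r h ∧ ∀ x ∈ r, J (h x) = J x} :=
        { toFun := fun f =>
            ⟨⟨fpfRestrict t f.1, f.2.1.restrict hts (hmt f.1 f.2.1 f.2.2)⟩,
             ⟨fpfRestrict r f.1, f.2.1.restrict hrs (hmr f.1 f.2.1 f.2.2), by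
                intro x hx
                unfold fpfRestrict
                rw [if_pos hx]
                exact f.2.2 x (hrs hx)⟩⟩
          invFun := fun p =>
            ⟨fpfGlue t p.1.1 p.2.1,
             FPF.glue hts hrs htr hst p.1.2 p.2.2.1, by
                intro x hx
                unfold fpfGlue
                by_cases hxt : x ∈ t
                · rw [if_pos hxt]
                  have h1 := (p.1.2.2.1 x hxt).1
                  have h2 := hxt
                  have h1' : J (p.1.1 x) = j₀ := (Finset.mem_filter.1 h1).2
                  have h2' : J x = j₀ := (Finset.mem_filter.1 h2).2
                  exact h1'.trans h2'.symm
                · rw [if_neg hxt]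
                  exact p.2.2.2 x (hst x hx hxt)⟩
          left_inv := by
            rintro ⟨f, ⟨h1, h2, h3⟩, h4⟩
            apply Subtype.ext
            show fpfGlue t (fpfRestrict t f) (fpfRestrict r f) = f
            funext x
            unfold fpfGlue fpfRestrict
            by_cases hxt : x ∈ t
            · rw [if_pos hxt, if_pos hxt]
            · rw [if_neg hxt]
              by_cases hxr : x ∈ r
              · rw [if_pos hxr]
              · rw [if_neg hxr]
                exact (h3 x (fun hc => hxr (hst x hc hxt))).symm
          right_inv := by
            rintro ⟨⟨g, hg⟩, ⟨h, hh⟩⟩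
            refine Prod.ext ?_ ?_
            · apply Subtype.ext
              show fpfRestrict t (fpfGlue t g h) = g
              funext x
              unfold fpfRestrict fpfGlue
              by_cases hxt : x ∈ t
              · rw [if_pos hxt, if_pos hxt]
              · rw [if_neg hxt, (hg.2.2 x hxt)]
            · apply Subtype.ext
              show fpfRestrict r (fpfGlue t g h) = h
              funext x
              unfold fpfRestrict fpfGlue
              by_cases hxr : x ∈ r
              · rw [if_pos hxr, if_neg (fun hc => htr x hc hxr)]
              · rw [if_neg hxr, (hh.1.2.2 x hxr)] }
      rw [Nat.card_congr key, Nat.card_prod]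
      have hfib : ∀ j, j ≠ j₀ →
          r.filter (fun x => J x = j) = s.filter (fun x => J x = j) := by
        intro j hj
        rw [hr, Finset.filter_filter]
        apply Finset.filter_congr
        intro x hx
        constructor
        · rintro ⟨-, h⟩; exact h
        · intro h; exact ⟨fun hc => hj (by rw [← h, hc]), h⟩
      have hfib0 : r.filter (fun x => J x = j₀) = ∅ := by
        rw [hr, Finset.filter_filter]
        apply Finset.filter_false_of_mem
        tauto
      have hrsub : r ⊂ s := by
        rw [Finset.ssubset_iff_of_subset hrs]
        refine ⟨a, ha, ?_⟩
        rw [hr, Finset.mem_filter]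
        push_neg
        intro _
        rfl
      have hrEven : ∀ j, Even ((r.filter fun x => J x = j).card) := by
        intro j
        by_cases hj : j = j₀
        · rw [hj, hfib0]; simp
        · rw [hfib j hj]; exact hs j
      rw [ih r hrsub hrEven]
      have htEven : Even t.card := hs j₀
      rw [card_FPF t htEven]
      have hj0im : j₀ ∉ r.image J := by
        rw [Finset.mem_image]
        rintro ⟨x, hx, hxj⟩
        rw [hr, Finset.mem_filter] at hx
        exact hx.2 hxj
      have him : s.image J = insert j₀ (r.image J) := by
        ext j
        rw [Finset.mem_insert, Finset.mem_image, Finset.mem_image]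
        constructor
        · rintro ⟨x, hx, rfl⟩
          by_cases hj : J x = j₀
          · exact Or.inl hj
          · exact Or.inr ⟨x, by rw [hr, Finset.mem_filter]; exact ⟨hx, hj⟩, rfl⟩
        · rintro (rfl | ⟨x, hx, rfl⟩)
          · exact ⟨a, ha, rfl⟩
          · exact ⟨x, hrs hx, rfl⟩
      rw [him, Finset.prod_insert hj0im]
      congr 1
      apply Finset.prod_congr rfl
      intro j hj
      have hjne : j ≠ j₀ := fun hc => hj0im (hc ▸ hj)
      rw [hfib j hjne]

section Bridge

variable {n : ℕ}

lemma pairInv_ne (x : Fin (2*n)) : pairInv n x ≠ x := by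
  intro h
  have h2 := congrArg Fin.val h
  simp only [pairInv] at h2
  omega

lemma pairInv_even (k : ℕ) (h : k < n) :
    pairInv n ⟨2*k, by omega⟩ = ⟨2*k+1, by omega⟩ := by
  apply Fin.ext
  show 2*((2*k)/2) + (1 - (2*k)%2) = 2*k+1
  omega

lemma pairInv_odd (k : ℕ) (h : k < n) :
    pairInv n ⟨2*k+1, by omega⟩ = ⟨2*k, by omega⟩ := by
  apply Fin.ext
  show 2*((2*k+1)/2) + (1 - (2*k+1)%2) = 2*k
  omega

def Ff (σ : Perm (Fin (2*n))) : Fin (2*n) → Fin (2*n) := fun x => σ (pairInv n (σ⁻¹ x))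

lemma Ff_comm (σ : Perm (Fin (2*n))) (i : Fin (2*n)) : Ff σ (σ i) = σ (pairInv n i) := by
  unfold Ff
  rw [Perm.coe_inv, symm_apply_apply]

lemma Ff_invol (σ : Perm (Fin (2*n))) (x : Fin (2*n)) : Ff σ (Ff σ x) = x := by
  unfold Ff
  rw [Perm.coe_inv, symm_apply_apply, pairInv_involutive, apply_symm_apply]

lemma Ff_ne (σ : Perm (Fin (2*n))) (x : Fin (2*n)) : Ff σ x ≠ x := by
  intro h
  have h2 : pairInv n (σ⁻¹ x) = σ⁻¹ x := by
    have h3 := congrArg (σ⁻¹ : Perm (Fin (2*n))) h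
    unfold Ff at h3
    rwa [Perm.coe_inv, symm_apply_apply, ← Perm.coe_inv] at h3
  exact pairInv_ne _ h2

lemma Ff_FPF (σ : Perm (Fin (2*n))) : FPF (univ : Finset (Fin (2*n))) (Ff σ) :=
  ⟨Ff_invol σ, fun x _ => ⟨Finset.mem_univ _, Ff_ne σ x⟩,
   fun x hx => absurd (Finset.mem_univ x) hx⟩

lemma pairsEq_iff (J : Fin (2*n) → ℕ) (σ : Perm (Fin (2*n))) :
    pairsEq J σ ↔ ∀ x, J (Ff σ x) = J x := by
  constructor
  · intro h x
    have hx : x = σ (σ⁻¹ x) := (σ.apply_symm_apply x).symm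
    rw [hx, Ff_comm]
    set i := σ⁻¹ x with hi
    have hk : i.val / 2 < n := by have := i.isLt; omega
    by_cases hp : i.val % 2 = 0
    · have hieq : i = ⟨2*(i.val/2), by omega⟩ := Fin.ext (show i.val = 2*(i.val/2) from by omega)
      rw [hieq, pairInv_even _ hk]
      exact (h _ hk).symm
    · have hieq : i = ⟨2*(i.val/2)+1, by omega⟩ := Fin.ext (show i.val = 2*(i.val/2)+1 from by omega)
      rw [hieq, pairInv_odd _ hk]
      exact h _ hk
  · intro h k hk
    have h2 := h (σ ⟨2*k, by omega⟩)
    rw [Ff_comm, pairInv_even k hk] at h2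
    exact h2.symm

def Msetf (f : Fin (2*n) → Fin (2*n)) : Finset (Fin (2*n)) := univ.filter fun x => x < f x

lemma card_Msetf (f : Fin (2*n) → Fin (2*n)) (h1 : ∀ x, f (f x) = x) (h2 : ∀ x, f x ≠ x) :
    (Msetf f).card = n := by
  have finj : Function.Injective f := Function.LeftInverse.injective h1
  have hbij : (univ.filter fun x : Fin (2*n) => x < f x).card
      = (univ.filter fun x : Fin (2*n) => ¬ x < f x).card := by
    apply Finset.card_nbij' f f
    · intro a ha
      simp only [Finset.mem_coe, Finset.mem_filter, Finset.mem_univ, true_and] at ha ⊢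
      rw [not_lt, h1]
      exact le_of_lt ha
    · intro a ha
      simp only [Finset.mem_coe, Finset.mem_filter, Finset.mem_univ, true_and] at ha ⊢
      rw [not_lt] at ha
      rw [h1]
      rcases lt_or_eq_of_le ha with h | h
      · exact h
      · exact absurd h (h2 a)
    · intro a _; exact h1 a
    · intro a _; exact h1 a
  have hsplit := Finset.card_filter_add_card_filter_not
    (s := (univ : Finset (Fin (2*n)))) (p := fun x => x < f x)
  rw [Finset.card_univ, Fintype.card_fin] at hsplit
  unfold Msetf
  omega

lemma strictMono_of_succ {β : Type*} [Preorder β] (g : Fin n → β)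
    (h : ∀ (k : ℕ) (hk : k+1 < n), g ⟨k, by omega⟩ < g ⟨k+1, hk⟩) : StrictMono g := by
  have key : ∀ (d j : ℕ) (hj : j < n) (i : ℕ) (hi : i < n), i + d + 1 = j →
      g ⟨i, hi⟩ < g ⟨j, hj⟩ := by
    intro d
    induction d with
    | zero =>
      intro j hj i hi hij
      have : j = i + 1 := by omega
      subst this
      exact h i hj
    | succ m ihm =>
      intro j hj i hi hij
      have h1 : i + m + 1 < n := by omega
      refine lt_trans (ihm (i+m+1) h1 i hi rfl) ?_
      refine lt_of_lt_of_eq (h (i+m+1) (by omega)) (congrArg g (Fin.ext ?_))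
      show i+m+1+1 = j
      omega
  rintro ⟨i, hi⟩ ⟨j, hj⟩ hij
  rw [Fin.mk_lt_mk] at hij
  exact key (j - i - 1) j hj i hi (by omega)

lemma pairPerm_evens_eq (σ : Perm (Fin (2*n))) (hσ : isPairPerm σ)
    (f : Fin (2*n) → Fin (2*n)) (hf : Ff σ = f) (hc : (Msetf f).card = n) :
    (fun k : Fin n => σ ⟨2*k.1, by omega⟩) = (Msetf f).orderEmbOfFin hc := by
  subst hf
  apply Finset.orderEmbOfFin_unique
  · rintro ⟨k, hk⟩
    simp only [Msetf, Finset.mem_filter, Finset.mem_univ, true_and]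
    rw [Ff_comm, pairInv_even k hk]
    exact hσ.1 k hk
  · apply strictMono_of_succ
    intro k hk
    have h2 := hσ.2 k hk
    exact lt_of_lt_of_eq h2 (congrArg σ (Fin.ext (show 2*k+2 = 2*(k+1) from by omega)))

lemma pairPerm_unique (σ₁ σ₂ : Perm (Fin (2*n))) (h₁ : isPairPerm σ₁) (h₂ : isPairPerm σ₂)
    (hF : Ff σ₁ = Ff σ₂) : σ₁ = σ₂ := by
  set f := Ff σ₁ with hf1
  have hf2 : Ff σ₂ = f := hF.symm
  have hc : (Msetf f).card = n := card_Msetf f (by rw [hf1]; exact Ff_invol σ₁)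
    (by rw [hf1]; exact Ff_ne σ₁)
  have e₁ := pairPerm_evens_eq σ₁ h₁ f rfl hc
  have e₂ := pairPerm_evens_eq σ₂ h₂ f hf2 hc
  have heven : ∀ (k : ℕ) (hk : k < n),
      σ₁ ⟨2*k, by omega⟩ = σ₂ ⟨2*k, by omega⟩ := by
    intro k hk
    exact (congrFun (e₁.trans e₂.symm) ⟨k, hk⟩ : _)
  have hodd : ∀ (k : ℕ) (hk : k < n),
      σ₁ ⟨2*k+1, by omega⟩ = σ₂ ⟨2*k+1, by omega⟩ := by
    intro k hk
    have c1 : σ₁ ⟨2*k+1, by omega⟩ = f (σ₁ ⟨2*k, by omega⟩) := by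
      rw [hf1, Ff_comm, pairInv_even k hk]
    have c2 : σ₂ ⟨2*k+1, by omega⟩ = f (σ₂ ⟨2*k, by omega⟩) := by
      rw [← hf2, Ff_comm, pairInv_even k hk]
    rw [c1, c2, heven k hk]
  apply Equiv.ext
  intro i
  have hk : i.val / 2 < n := by have := i.isLt; omega
  by_cases hp : i.val % 2 = 0
  · have hieq : i = ⟨2*(i.val/2), by omega⟩ := Fin.ext (show i.val = 2*(i.val/2) from by omega)
    rw [hieq]
    exact heven _ hk
  · have hieq : i = ⟨2*(i.val/2)+1, by omega⟩ := Fin.ext (show i.val = 2*(i.val/2)+1 from by omega)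
    rw [hieq]
    exact hodd _ hk

def mkFun (f : Fin (2*n) → Fin (2*n)) (hc : (Msetf f).card = n) : Fin (2*n) → Fin (2*n) :=
  fun i =>
    if i.val % 2 = 0 then (Msetf f).orderEmbOfFin hc ⟨i.val/2, by have := i.isLt; omega⟩
    else f ((Msetf f).orderEmbOfFin hc ⟨i.val/2, by have := i.isLt; omega⟩)

lemma mem_Msetf_lt (f : Fin (2*n) → Fin (2*n)) (hc : (Msetf f).card = n) (m : Fin n) :
    (Msetf f).orderEmbOfFin hc m < f ((Msetf f).orderEmbOfFin hc m) := by
  have := Finset.orderEmbOfFin_mem (Msetf f) hc m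
  simpa only [Msetf, Finset.mem_filter, Finset.mem_univ, true_and] using this

lemma mkFun_inj (f : Fin (2*n) → Fin (2*n)) (hc : (Msetf f).card = n)
    (h1 : ∀ x, f (f x) = x) : Function.Injective (mkFun f hc) := by
  have finj : Function.Injective f := Function.LeftInverse.injective h1
  have einj : Function.Injective ((Msetf f).orderEmbOfFin hc) := RelEmbedding.injective _
  intro i j hij
  unfold mkFun at hij
  by_cases hi : i.val % 2 = 0 <;> by_cases hj : j.val % 2 = 0
  · rw [if_pos hi, if_pos hj] at hij
    have := einj hij
    rw [Fin.mk.injEq] at this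
    exact Fin.ext (by omega)
  · rw [if_pos hi, if_neg hj] at hij
    exfalso
    set A := (Msetf f).orderEmbOfFin hc ⟨i.val/2, by have := i.isLt; omega⟩ with hA
    set B := (Msetf f).orderEmbOfFin hc ⟨j.val/2, by have := j.isLt; omega⟩ with hB
    have l1 : A < f A := mem_Msetf_lt f hc _
    have l2 : B < f B := mem_Msetf_lt f hc _
    have hfa : f A = B := by rw [hij, h1]
    have e1 : A < B := by rw [← hfa]; exact l1
    have e2 : B < A := by rw [hij]; exact l2
    exact absurd e1 (not_lt.2 (le_of_lt e2))
  · rw [if_neg hi, if_pos hj] at hij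
    exfalso
    set A := (Msetf f).orderEmbOfFin hc ⟨i.val/2, by have := i.isLt; omega⟩ with hA
    set B := (Msetf f).orderEmbOfFin hc ⟨j.val/2, by have := j.isLt; omega⟩ with hB
    have l1 : A < f A := mem_Msetf_lt f hc _
    have l2 : B < f B := mem_Msetf_lt f hc _
    have hfb : f B = A := by rw [← hij, h1]
    have e1 : A < B := by rw [← hij]; exact l1
    have e2 : B < A := by rw [← hfb]; exact l2
    exact absurd e1 (not_lt.2 (le_of_lt e2))
  · rw [if_neg hi, if_neg hj] at hij
    have := einj (finj hij)
    rw [Fin.mk.injEq] at this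
    exact Fin.ext (by omega)

noncomputable def mkPerm (f : Fin (2*n) → Fin (2*n)) (hc : (Msetf f).card = n)
    (h1 : ∀ x, f (f x) = x) : Perm (Fin (2*n)) :=
  Equiv.ofBijective (mkFun f hc)
    ((Finite.injective_iff_bijective).1 (mkFun_inj f hc h1))

lemma mkPerm_even (f : Fin (2*n) → Fin (2*n)) (hc : (Msetf f).card = n)
    (h1 : ∀ x, f (f x) = x) (k : ℕ) (hk : k < n) :
    mkPerm f hc h1 ⟨2*k, by omega⟩ = (Msetf f).orderEmbOfFin hc ⟨k, hk⟩ := by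
  show mkFun f hc ⟨2*k, by omega⟩ = _
  unfold mkFun
  rw [if_pos (by omega : (2*k) % 2 = 0)]
  exact congrArg _ (Fin.ext (show (2*k)/2 = k from by omega))

lemma mkPerm_odd (f : Fin (2*n) → Fin (2*n)) (hc : (Msetf f).card = n)
    (h1 : ∀ x, f (f x) = x) (k : ℕ) (hk : k < n) :
    mkPerm f hc h1 ⟨2*k+1, by omega⟩ = f ((Msetf f).orderEmbOfFin hc ⟨k, hk⟩) := by
  show mkFun f hc ⟨2*k+1, by omega⟩ = _
  unfold mkFun
  rw [if_neg (by omega : ¬ (2*k+1) % 2 = 0)]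
  exact congrArg _ (congrArg _ (Fin.ext (show (2*k+1)/2 = k from by omega)))

lemma mkPerm_isPairPerm (f : Fin (2*n) → Fin (2*n)) (hc : (Msetf f).card = n)
    (h1 : ∀ x, f (f x) = x) : isPairPerm (mkPerm f hc h1) := by
  constructor
  · intro k hk
    rw [mkPerm_even f hc h1 k hk, mkPerm_odd f hc h1 k hk]
    exact mem_Msetf_lt f hc ⟨k, hk⟩
  · intro k hk
    rw [mkPerm_even f hc h1 k (by omega)]
    have e2 : (⟨2*k+2, by omega⟩ : Fin (2*n)) = ⟨2*(k+1), by omega⟩ := Fin.ext (show 2*k+2 = 2*(k+1) from by omega)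
    rw [e2, mkPerm_even f hc h1 (k+1) hk]
    exact ((Msetf f).orderEmbOfFin hc).strictMono (by rw [Fin.mk_lt_mk]; omega)

lemma Ff_mkPerm (f : Fin (2*n) → Fin (2*n)) (hc : (Msetf f).card = n)
    (h1 : ∀ x, f (f x) = x) : Ff (mkPerm f hc h1) = f := by
  set σ := mkPerm f hc h1 with hσ
  funext x
  obtain ⟨i, rfl⟩ := σ.surjective x
  rw [Ff_comm]
  have hk : i.val / 2 < n := by have := i.isLt; omega
  by_cases hp : i.val % 2 = 0
  · have hieq : i = ⟨2*(i.val/2), by omega⟩ := Fin.ext (show i.val = 2*(i.val/2) from by omega)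
    rw [hieq, pairInv_even _ hk, mkPerm_odd f hc h1 _ hk, mkPerm_even f hc h1 _ hk]
  · have hieq : i = ⟨2*(i.val/2)+1, by omega⟩ := Fin.ext (show i.val = 2*(i.val/2)+1 from by omega)
    rw [hieq, pairInv_odd _ hk, mkPerm_even f hc h1 _ hk, mkPerm_odd f hc h1 _ hk, h1]

end Bridge


end Aux

open Nat in
/-- If every value j occurring in the list J = (j₁,…,j_{2n}) occurs an even number m_j of
times, then the number of pair partitions τ ∈ M_{2n} with δ_J(τ) = 1 equals
∏_j (m_j − 1)!!, the product over the distinct values occurring in J. -/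
theorem stmt3 (n : ℕ) (hn : 1 ≤ n) (J : Fin (2*n) → ℕ)
    (hJ : ∀ j, Even ((Finset.univ.filter fun k => J k = j).card)) :
    Nat.card {τ : Perm (Fin (2*n)) // isPairPerm τ ∧ pairsEq J τ} =
      ∏ j ∈ Finset.univ.image J, ((Finset.univ.filter fun k => J k = j).card - 1)‼ := by
  have key : {τ : Perm (Fin (2*n)) // isPairPerm τ ∧ pairsEq J τ} ≃
      {f : Fin (2*n) → Fin (2*n) //
        FPF (univ : Finset (Fin (2*n))) f ∧ ∀ x ∈ (univ : Finset (Fin (2*n))), J (f x) = J x} :=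
    { toFun := fun τ => ⟨Ff τ.1, Ff_FPF τ.1, fun x _ => (pairsEq_iff J τ.1).1 τ.2.2 x⟩
      invFun := fun p =>
        ⟨mkPerm p.1 (card_Msetf p.1 p.2.1.1 (fun x => (p.2.1.2.1 x (Finset.mem_univ x)).2)) p.2.1.1,
         mkPerm_isPairPerm _ _ _,
         (pairsEq_iff J _).2 (by
            rw [Ff_mkPerm]
            exact fun x => p.2.2 x (Finset.mem_univ x))⟩
      left_inv := by
        rintro ⟨τ, hτ1, hτ2⟩
        apply Subtype.ext
        have hc := card_Msetf (Ff τ) (Ff_invol τ) (Ff_ne τ)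
        have h1 : ∀ x, Ff τ (Ff τ x) = x := Ff_invol τ
        show mkPerm (Ff τ) hc h1 = τ
        exact pairPerm_unique _ τ (mkPerm_isPairPerm (Ff τ) hc h1) hτ1 (Ff_mkPerm (Ff τ) hc h1)
      right_inv := by
        rintro ⟨f, hf1, hf2⟩
        apply Subtype.ext
        have hc := card_Msetf f hf1.1 (fun x => (hf1.2.1 x (Finset.mem_univ x)).2)
        show Ff (mkPerm f hc hf1.1) = f
        exact Ff_mkPerm f hc hf1.1 }
  rw [Nat.card_congr key]
  exact card_FPF_colored J univ hJ
end

section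
/- Let I = (i_1,…,i_{2n}) be a list with entries in {1,…,d} and suppose σ_I ∈ M_{2n} satisfies δ_I(σ_I) = 1. For a list L and π ∈ S_{2n}, write L∘π = (l_{π(1)},…,l_{π(2n)}). Then for every σ ∈ M_{2n} (viewed as a permutation): δ_I(σ) = 1 if and only if σ ∈ σ_I · Stab · H_n, where Stab = {γ ∈ S_{2n} : (I∘σ_I)∘γ = I∘σ_I} is the stabilizer of the rearranged list I∘σ_I and H_n is the hyperoctahedral group. -/
open Equiv Finset

/-- The fixed-point-free involution (1 2)(3 4)⋯(2n−1 2n) (0-indexed: 2k ↔ 2k+1). -/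
def pairPerm (n : ℕ) : Perm (Fin (2*n)) :=
  Function.Involutive.toPerm (pairInv n) (pairInv_involutive n)

/-- The hyperoctahedral group H_n: the centralizer in S_{2n} of (1 2)(3 4)⋯(2n−1 2n). -/
def hyperoctahedral (n : ℕ) : Subgroup (Perm (Fin (2*n))) :=
  Subgroup.centralizer {pairPerm n}


section Aux

open Equiv

variable {n d : ℕ}

/-- Double a pair index to get the (even) position of the pair. -/
def dbl {n : ℕ} (k : Fin n) : Fin (2*n) := ⟨2*k.val, by omega⟩

/-- The pair index of a position. -/
def half {n : ℕ} (x : Fin (2*n)) : Fin n := ⟨x.val/2, by omega⟩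

lemma perm_inv_apply_self {α : Type*} (f : Perm α) (x : α) : f⁻¹ (f x) = x :=
  f.symm_apply_apply x

lemma perm_apply_inv_self {α : Type*} (f : Perm α) (x : α) : f (f⁻¹ x) = x :=
  f.apply_symm_apply x

lemma pairPerm_apply (n : ℕ) (x : Fin (2*n)) : pairPerm n x = pairInv n x := rfl

lemma half_pairInv (x : Fin (2*n)) : half (pairInv n x) = half x :=
  Fin.ext (show (2*(x.val/2) + (1 - x.val%2))/2 = x.val/2 by omega)

lemma pairsEq_base {I : Fin (2*n) → Fin d} {π : Perm (Fin (2*n))} (hπ : pairsEq I π)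
    (x : Fin (2*n)) : I (π (dbl (half x))) = I (π x) := by
  rcases Nat.mod_two_eq_zero_or_one x.val with h | h
  · have he : dbl (half x) = x := Fin.ext (show 2*(x.val/2) = x.val by omega)
    rw [he]
  · have hx : x.val/2 < n := by omega
    have hp := hπ (x.val/2) hx
    have e1 : dbl (half x) = (⟨2*(x.val/2), by omega⟩ : Fin (2*n)) := Fin.ext rfl
    have e2 : (⟨2*(x.val/2)+1, by omega⟩ : Fin (2*n)) = x :=
      Fin.ext (show 2*(x.val/2)+1 = x.val by omega)
    rw [e1, hp, e2]

lemma pairsEq_pairInv {I : Fin (2*n) → Fin d} {π : Perm (Fin (2*n))} (hπ : pairsEq I π)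
    (x : Fin (2*n)) : I (π (pairInv n x)) = I (π x) := by
  calc I (π (pairInv n x)) = I (π (dbl (half (pairInv n x)))) := (pairsEq_base hπ _).symm
    _ = I (π (dbl (half x))) := by rw [half_pairInv]
    _ = I (π x) := pairsEq_base hπ x

/-- Lift a permutation of pair indices to a pair-preserving permutation of positions. -/
def pairLift (τ : Perm (Fin n)) : Perm (Fin (2*n)) where
  toFun x := ⟨2*(τ (half x)).val + x.val % 2, by have := (τ (half x)).isLt; omega⟩
  invFun x := ⟨2*(τ⁻¹ (half x)).val + x.val % 2, by have := (τ⁻¹ (half x)).isLt; omega⟩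
  left_inv x := by
    have e : half (⟨2*(τ (half x)).val + x.val % 2,
        by have := (τ (half x)).isLt; omega⟩ : Fin (2*n)) = τ (half x) :=
      Fin.ext (show (2*(τ (half x)).val + x.val % 2)/2 = (τ (half x)).val by omega)
    apply Fin.ext
    show 2*(τ⁻¹ (half ⟨2*(τ (half x)).val + x.val % 2, _⟩)).val
      + (2*(τ (half x)).val + x.val % 2) % 2 = x.val
    rw [e, perm_inv_apply_self]
    show 2*(x.val/2) + (2*(τ (half x)).val + x.val % 2) % 2 = x.val
    omega
  right_inv x := by
    have e : half (⟨2*(τ⁻¹ (half x)).val + x.val % 2,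
        by have := (τ⁻¹ (half x)).isLt; omega⟩ : Fin (2*n)) = τ⁻¹ (half x) :=
      Fin.ext (show (2*(τ⁻¹ (half x)).val + x.val % 2)/2 = (τ⁻¹ (half x)).val by omega)
    apply Fin.ext
    show 2*(τ (half ⟨2*(τ⁻¹ (half x)).val + x.val % 2, _⟩)).val
      + (2*(τ⁻¹ (half x)).val + x.val % 2) % 2 = x.val
    rw [e, perm_apply_inv_self]
    show 2*(x.val/2) + (2*(τ⁻¹ (half x)).val + x.val % 2) % 2 = x.val
    omega

lemma pairLift_apply (τ : Perm (Fin n)) (x : Fin (2*n)) :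
    pairLift τ x = ⟨2*(τ (half x)).val + x.val % 2, by have := (τ (half x)).isLt; omega⟩ := rfl

lemma half_pairLift (τ : Perm (Fin n)) (x : Fin (2*n)) :
    half (pairLift τ x) = τ (half x) :=
  Fin.ext (show (2*(τ (half x)).val + x.val % 2)/2 = (τ (half x)).val by omega)

lemma pairLift_mem (τ : Perm (Fin n)) : pairLift τ ∈ hyperoctahedral n := by
  rw [hyperoctahedral, Subgroup.mem_centralizer_iff]
  rintro g hg
  rw [Set.mem_singleton_iff] at hg
  subst hg
  ext x
  simp only [Perm.mul_apply, pairPerm_apply, pairLift_apply, half_pairInv]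
  show 2*((2*(τ (half x)).val + x.val % 2)/2) + (1 - (2*(τ (half x)).val + x.val % 2) % 2)
    = 2*(τ (half x)).val + (2*(x.val/2) + (1 - x.val % 2)) % 2
  omega

lemma two_mul_card_fiber (I : Fin (2*n) → Fin d) (π : Perm (Fin (2*n)))
    (hπ : pairsEq I π) (v : Fin d) :
    Nat.card {x : Fin (2*n) // I (π x) = v}
      = 2 * Nat.card {k : Fin n // I (π (dbl k)) = v} := by
  have e : {x : Fin (2*n) // I (π x) = v}
      ≃ ({k : Fin n // I (π (dbl k)) = v} × Fin 2) := by
    refine ⟨fun x => ⟨⟨half x.val, (pairsEq_base hπ x.val).trans x.2⟩,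
      ⟨x.val.val % 2, by omega⟩⟩,
      fun p => ⟨⟨2*p.1.val.val + p.2.val,
        by have := p.1.val.isLt; have := p.2.isLt; omega⟩, ?_⟩, ?_, ?_⟩
    · have hb := pairsEq_base hπ (⟨2*p.1.val.val + p.2.val,
        by have := p.1.val.isLt; have := p.2.isLt; omega⟩ : Fin (2*n))
      have e2 : half (⟨2*p.1.val.val + p.2.val,
          by have := p.1.val.isLt; have := p.2.isLt; omega⟩ : Fin (2*n)) = p.1.val :=
        Fin.ext (show (2*p.1.val.val + p.2.val)/2 = p.1.val.val by have := p.2.isLt; omega)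
      rw [e2] at hb
      exact hb.symm.trans p.1.2
    · intro x
      apply Subtype.ext
      apply Fin.ext
      show 2*(x.val.val/2) + x.val.val % 2 = x.val.val
      omega
    · intro p
      have h2 := p.2.isLt
      refine Prod.ext ?_ ?_
      · apply Subtype.ext
        apply Fin.ext
        show (2*p.1.val.val + p.2.val)/2 = p.1.val.val
        omega
      · apply Fin.ext
        show (2*p.1.val.val + p.2.val) % 2 = p.2.val
        omega
  rw [Nat.card_congr e, Nat.card_prod, Nat.card_eq_fintype_card (α := Fin 2), Fintype.card_fin]
  ring

lemma exists_perm_comp {α β : Type*} [Fintype α] [DecidableEq β] {f g : α → β}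
    (h : ∀ v, Nat.card {a // f a = v} = Nat.card {a // g a = v}) :
    ∃ τ : Perm α, ∀ a, g (τ a) = f a := by
  classical
  have e : ∀ v, {a // f a = v} ≃ {a // g a = v} := fun v =>
    Fintype.equivOfCardEq (by simpa [Nat.card_eq_fintype_card] using h v)
  refine ⟨(Equiv.sigmaFiberEquiv f).symm.trans
    ((Equiv.sigmaCongrRight e).trans (Equiv.sigmaFiberEquiv g)), fun a => ?_⟩
  exact (e (f a) ⟨a, rfl⟩).2

end Aux

/-- Let I be a list and σ_I ∈ M_{2n} with δ_I(σ_I) = 1.  Then for σ ∈ M_{2n}: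
δ_I(σ) = 1 iff σ ∈ σ_I · Stab · H_n, where Stab is the stabilizer
{γ ∈ S_{2n} : (I∘σ_I)∘γ = I∘σ_I} of the rearranged list I∘σ_I and H_n is the
hyperoctahedral group. -/
theorem stmt14 (n d : ℕ) (hn : 1 ≤ n) (I : Fin (2*n) → Fin d)
    (σI : Perm (Fin (2*n))) (hσI : isPairPerm σI ∧ pairsEq I σI)
    (σ : Perm (Fin (2*n))) (hσ : isPairPerm σ) :
    pairsEq I σ ↔
      ∃ γ h : Perm (Fin (2*n)),
        (∀ p, I (σI (γ p)) = I (σI p)) ∧ h ∈ hyperoctahedral n ∧ σ = σI * γ * h := by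
  classical
  constructor
  · intro hpe
    have hcard : ∀ v : Fin d, Nat.card {k : Fin n // I (σ (dbl k)) = v}
        = Nat.card {k : Fin n // I (σI (dbl k)) = v} := by
      intro v
      have h1 := two_mul_card_fiber I σ hpe v
      have h2 := two_mul_card_fiber I σI hσI.2 v
      have h3 : Nat.card {x : Fin (2*n) // I (σ x) = v}
          = Nat.card {x : Fin (2*n) // I (σI x) = v} :=
        Nat.card_congr ((Equiv.subtypeEquiv (p := fun x => I (σ x) = v)
            (q := fun y => I y = v) σ fun a => Iff.rfl).trans
          (Equiv.subtypeEquiv (p := fun x => I (σI x) = v)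
            (q := fun y => I y = v) σI fun a => Iff.rfl).symm)
      omega
    obtain ⟨τ, hτ⟩ := exists_perm_comp hcard
    refine ⟨σI⁻¹ * σ * (pairLift τ)⁻¹, pairLift τ, ?_, pairLift_mem τ, by group⟩
    intro p
    simp only [Perm.mul_apply, perm_apply_inv_self]
    conv_rhs => rw [show p = pairLift τ ((pairLift τ)⁻¹ p) from (perm_apply_inv_self _ _).symm]
    set q := (pairLift τ)⁻¹ p with hq
    calc I (σ q) = I (σ (dbl (half q))) := (pairsEq_base hpe q).symm
      _ = I (σI (dbl (τ (half q)))) := (hτ (half q)).symm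
      _ = I (σI (dbl (half (pairLift τ q)))) := by rw [half_pairLift]
      _ = I (σI (pairLift τ q)) := pairsEq_base hσI.2 _
  · rintro ⟨γ, h, hγ, hh, rfl⟩
    have hcomm : ∀ x : Fin (2*n), h (pairPerm n x) = pairPerm n (h x) := by
      rw [hyperoctahedral, Subgroup.mem_centralizer_iff] at hh
      have hc := hh (pairPerm n) (Set.mem_singleton _)
      intro x
      have := congrArg (fun e => e x) hc
      simpa [Perm.mul_apply] using this.symm
    have key : ∀ y : Fin (2*n), I (σI (γ (pairPerm n y))) = I (σI (γ y)) := by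
      intro y
      rw [hγ (pairPerm n y), hγ y, pairPerm_apply, pairsEq_pairInv hσI.2]
    intro k hk
    have h21 : (⟨2*k+1, by omega⟩ : Fin (2*n)) = pairPerm n ⟨2*k, by omega⟩ :=
      Fin.ext (show 2*k+1 = 2*((2*k)/2) + (1 - (2*k)%2) by omega)
    simp only [Perm.mul_apply]
    have e2 : h (⟨2*k+1, by omega⟩ : Fin (2*n)) = pairPerm n (h ⟨2*k, by omega⟩) := by
      rw [h21, hcomm]
    rw [e2]
    exact (key (h ⟨2*k, by omega⟩)).symm
end
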